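/- In the setup below, the relative poset polytope R(P,<,<') is normal: for every integer k ≥ 1, every x ∈ ℤ^P with x ∈ k·R(P,<,<') can be written as x = y_1 + ⋯ + y_k where each y_i is an integer point of R(P,<,<') (y_i ∈ ℤ^P and y_i ∈ R(P,<,<')). -/

import Mathlib

open Pointwise

/-- `J` is an order ideal (lower set) with respect to the strict order relation `r`. -/
def IsLowerIdeal {P : Type*} (r : P → P → Prop) (J : Set P) : Prop :=
  ∀ ⦃p q : P⦄, r p q → q ∈ J → p ∈ J

/-- The set of `r`-maximal elements of `J`. -/
def maxElems {P : Type*} (r : P → P → Prop) (J : Set P) : Set P :=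
  {p ∈ J | ∀ q ∈ J, ¬ r p q}

/-- The 0/1 indicator vector of `A ⊆ P`, as a point of `ℝ^P`. -/
noncomputable def ind {P : Type*} (A : Set P) : P → ℝ :=
  A.indicator 1

/-- The order ideal of `(P, r)` generated by `A`. -/
def genIdeal {P : Type*} (r : P → P → Prop) (A : Set P) : Set P :=
  {p | ∃ q ∈ A, p = q ∨ r p q}

/-- The Hibi–Li operation `J1 *' J2` relative to the order `r`: the order ideal of `(P, r)`
generated by `(J1 ∩ J2) ∩ (max_r J1 ∪ max_r J2)`. -/
def starOp {P : Type*} (r : P → P → Prop) (J1 J2 : Set P) : Set P :=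
  genIdeal r ((J1 ∩ J2) ∩ (maxElems r J1 ∪ maxElems r J2))

/-- The relative poset polytope `R(P, lt, lt')`: the convex hull of the points
`1_{max_{lt'} J}` over all order ideals `J` of `(P, lt)`. -/
noncomputable def RPP {P : Type*} (lt lt' : P → P → Prop) : Set (P → ℝ) :=
  convexHull ℝ {x | ∃ J : Set P, IsLowerIdeal lt J ∧ x = ind (maxElems lt' J)}

/-- The dilation `m·Q = {m·x : x ∈ Q}`. -/
def dilate {P : Type*} (m : ℕ) (Q : Set (P → ℝ)) : Set (P → ℝ) :=
  (fun x => (m : ℝ) • x) '' Q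

/-- The order polytope of `(P, lt)`. -/
def orderPolytope {P : Type*} (lt : P → P → Prop) : Set (P → ℝ) :=
  {x | (∀ p, 0 ≤ x p ∧ x p ≤ 1) ∧ ∀ p q, lt q p → x p ≤ x q}

/-- The chain polytope of `(P, lt)`. -/
def chainPolytope {P : Type*} (lt : P → P → Prop) : Set (P → ℝ) :=
  {x | (∀ p, 0 ≤ x p) ∧ ∀ (k : ℕ) (c : Fin k → P),
    (∀ i j : Fin k, i < j → lt (c i) (c j)) → (∑ i, x (c i)) ≤ 1}


set_option linter.unusedSectionVars false

section Aux

variable {P : Type*} [Fintype P] {lt lt' : P → P → Prop}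

open Classical in
lemma ind_apply (A : Set P) (p : P) : ind A p = if p ∈ A then (1:ℝ) else 0 := by
  simp [ind, Set.indicator_apply]

/-- climbing: every element of a set lies (weakly) `lt'`-below a `lt'`-maximal element. -/
lemma exists_max_above (hlt'irr : ∀ p, ¬ lt' p p)
    (hlt'tr : ∀ a b c, lt' a b → lt' b c → lt' a c)
    (J : Set P) : ∀ p ∈ J, ∃ a ∈ maxElems lt' J, p = a ∨ lt' p a := by
  haveI : IsTrans P (Function.swap lt') := ⟨fun a b c h1 h2 => hlt'tr _ _ _ h2 h1⟩
  haveI : IsIrrefl P (Function.swap lt') := ⟨fun a => hlt'irr a⟩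
  have hwf : WellFounded (Function.swap lt') :=
    Finite.wellFounded_of_trans_of_irrefl (Function.swap lt')
  intro p
  induction p using hwf.induction with
  | _ p ih =>
    intro hp
    by_cases hmax : ∀ q ∈ J, ¬ lt' p q
    · exact ⟨p, ⟨hp, hmax⟩, Or.inl rfl⟩
    · push_neg at hmax
      obtain ⟨q, hqJ, hpq⟩ := hmax
      obtain ⟨a, haM, hqa⟩ := ih q hpq hqJ
      refine ⟨a, haM, Or.inr ?_⟩
      rcases hqa with rfl | h
      · exact hpq
      · exact hlt'tr _ _ _ hpq h

end Aux

set_option linter.unusedSectionVars false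

section Exchange

variable {P : Type*} [Fintype P] {lt lt' : P → P → Prop}

lemma union_ideal {J1 J2 : Set P} (h1 : IsLowerIdeal lt J1) (h2 : IsLowerIdeal lt J2) :
    IsLowerIdeal lt (J1 ∪ J2) := by
  intro p q hpq hq
  rcases hq with h | h
  · exact Or.inl (h1 hpq h)
  · exact Or.inr (h2 hpq h)

lemma inter_ideal {J1 J2 : Set P} (h1 : IsLowerIdeal lt J1) (h2 : IsLowerIdeal lt J2) :
    IsLowerIdeal lt (J1 ∩ J2) :=
  fun _ _ hpq hq => ⟨h1 hpq hq.1, h2 hpq hq.2⟩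

lemma maxElems_subset (r : P → P → Prop) (J : Set P) : maxElems r J ⊆ J := fun _ h => h.1

lemma star_subset (hweak : ∀ p q, lt' p q → lt p q) {J1 J2 : Set P} (h1 : IsLowerIdeal lt J1) (h2 : IsLowerIdeal lt J2) :
    starOp lt' J1 J2 ⊆ J1 ∩ J2 := by
  rintro p ⟨g, hg, hpg⟩
  have hgJ : g ∈ J1 ∩ J2 := hg.1
  rcases hpg with rfl | h
  · exact hgJ
  · exact (inter_ideal h1 h2) (hweak _ _ h) hgJ

lemma max_star_eq (hweak : ∀ p q, lt' p q → lt p q) {J1 J2 : Set P} (h1 : IsLowerIdeal lt J1) (h2 : IsLowerIdeal lt J2) :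
    maxElems lt' (starOp lt' J1 J2) =
      (J1 ∩ J2) ∩ (maxElems lt' J1 ∪ maxElems lt' J2) := by
  ext p
  constructor
  · rintro ⟨hp, hmax⟩
    obtain ⟨g, hg, hpg⟩ := hp
    rcases hpg with rfl | h
    · exact hg
    · exact absurd (hmax g ⟨g, hg, Or.inl rfl⟩) (by exact fun hf => hf h)
  · intro hp
    refine ⟨⟨p, hp, Or.inl rfl⟩, ?_⟩
    intro r hr hpr
    have hrJ : r ∈ J1 ∩ J2 := star_subset hweak h1 h2 hr
    rcases hp.2 with hm | hm
    · exact hm.2 r hrJ.1 hpr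
    · exact hm.2 r hrJ.2 hpr

lemma mem_max_union_iff (hweak : ∀ p q, lt' p q → lt p q) {J1 J2 : Set P} (h1 : IsLowerIdeal lt J1) (h2 : IsLowerIdeal lt J2)
    (p : P) :
    p ∈ maxElems lt' (J1 ∪ J2) ↔
      (p ∈ maxElems lt' J1 ∧ p ∈ maxElems lt' J2) ∨
      (p ∈ maxElems lt' J1 ∧ p ∉ J2) ∨ (p ∈ maxElems lt' J2 ∧ p ∉ J1) := by
  constructor
  · rintro ⟨hp, hmax⟩
    have hmax1 : p ∈ J1 → p ∈ maxElems lt' J1 :=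
      fun h => ⟨h, fun q hq => hmax q (Or.inl hq)⟩
    have hmax2 : p ∈ J2 → p ∈ maxElems lt' J2 :=
      fun h => ⟨h, fun q hq => hmax q (Or.inr hq)⟩
    by_cases hp1 : p ∈ J1 <;> by_cases hp2 : p ∈ J2
    · exact Or.inl ⟨hmax1 hp1, hmax2 hp2⟩
    · exact Or.inr (Or.inl ⟨hmax1 hp1, hp2⟩)
    · exact Or.inr (Or.inr ⟨hmax2 hp2, hp1⟩)
    · rcases hp with h | h
      · exact absurd h hp1
      · exact absurd h hp2
  · intro h
    have key : ∀ q ∈ J1 ∪ J2, ¬ lt' p q := by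
      intro q hq hpq
      rcases h with ⟨hm1, hm2⟩ | ⟨hm1, hn2⟩ | ⟨hm2, hn1⟩
      · rcases hq with h | h
        · exact hm1.2 q h hpq
        · exact hm2.2 q h hpq
      · rcases hq with h | h
        · exact hm1.2 q h hpq
        · exact hn2 (h2 (hweak _ _ hpq) h)
      · rcases hq with h | h
        · exact hn1 (h1 (hweak _ _ hpq) h)
        · exact hm2.2 q h hpq
    rcases h with ⟨hm1, _⟩ | ⟨hm1, _⟩ | ⟨hm2, _⟩
    · exact ⟨Or.inl hm1.1, key⟩
    · exact ⟨Or.inl hm1.1, key⟩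
    · exact ⟨Or.inr hm2.1, key⟩

/-- The exchange identity. -/
lemma exchange (hweak : ∀ p q, lt' p q → lt p q) {J1 J2 : Set P} (h1 : IsLowerIdeal lt J1) (h2 : IsLowerIdeal lt J2) :
    ind (maxElems lt' J1) + ind (maxElems lt' J2) =
      ind (maxElems lt' (J1 ∪ J2)) + ind (maxElems lt' (starOp lt' J1 J2)) := by
  classical
  funext p
  have hstar : p ∈ maxElems lt' (starOp lt' J1 J2) ↔
      (p ∈ maxElems lt' J1 ∧ p ∈ J2) ∨ (p ∈ maxElems lt' J2 ∧ p ∈ J1) := by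
    rw [max_star_eq hweak h1 h2]
    constructor
    · rintro ⟨⟨hp1, hp2⟩, hm | hm⟩
      · exact Or.inl ⟨hm, hp2⟩
      · exact Or.inr ⟨hm, hp1⟩
    · rintro (⟨hm, hp2⟩ | ⟨hm, hp1⟩)
      · exact ⟨⟨hm.1, hp2⟩, Or.inl hm⟩
      · exact ⟨⟨hp1, hm.1⟩, Or.inr hm⟩
  have hu := mem_max_union_iff hweak h1 h2 p
  simp only [Pi.add_apply, ind_apply]
  rw [if_congr hu rfl rfl, if_congr hstar rfl rfl]
  by_cases hm1 : p ∈ maxElems lt' J1 <;> by_cases hm2 : p ∈ maxElems lt' J2 <;>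
    by_cases hp1 : p ∈ J1 <;> by_cases hp2 : p ∈ J2 <;>
    first
      | exact absurd hm1.1 hp1
      | exact absurd hm2.1 hp2
      | simp [hm1, hm2, hp1, hp2]

end Exchange

section Sorting

variable {P : Type*} [Fintype P] {lt lt' : P → P → Prop}

lemma msum_apply (M : Multiset (P → ℝ)) (p : P) :
    M.sum p = (M.map (fun f => f p)).sum := by
  induction M using Multiset.induction with
  | empty => simp
  | cons f s ih => simp [ih]

/-- Sorting a multiset of ideals into a chain, preserving the sum of indicator vectors. -/
lemma sort_multiset
    (hweak : ∀ p q, lt' p q → lt p q)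
    (hstar : ∀ J1 J2 : Set P, IsLowerIdeal lt J1 → IsLowerIdeal lt J2 →
      IsLowerIdeal lt (starOp lt' J1 J2))
    (M : Multiset (Set P)) (hM : ∀ J ∈ M, IsLowerIdeal lt J) :
    ∃ M' : Multiset (Set P), Multiset.card M' = Multiset.card M ∧
      (∀ J ∈ M', IsLowerIdeal lt J) ∧
      (∀ J1 ∈ M', ∀ J2 ∈ M', J1 ⊆ J2 ∨ J2 ⊆ J1) ∧
      (M'.map fun J => ind (maxElems lt' J)).sum = (M.map fun J => ind (maxElems lt' J)).sum := by
  classical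
  have main : ∀ n : ℕ, ∀ M : Multiset (Set P),
      (Multiset.card M * 2 ^ Fintype.card P + 1 - (M.map fun J => 2 ^ J.ncard).sum) = n →
      (∀ J ∈ M, IsLowerIdeal lt J) →
      ∃ M' : Multiset (Set P), Multiset.card M' = Multiset.card M ∧
        (∀ J ∈ M', IsLowerIdeal lt J) ∧
        (∀ J1 ∈ M', ∀ J2 ∈ M', J1 ⊆ J2 ∨ J2 ⊆ J1) ∧
        (M'.map fun J => ind (maxElems lt' J)).sum
          = (M.map fun J => ind (maxElems lt' J)).sum := by
    intro n
    induction n using Nat.strong_induction_on with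
    | _ n ih =>
      intro M hn hM
      by_cases hchain : ∀ J1 ∈ M, ∀ J2 ∈ M, J1 ⊆ J2 ∨ J2 ⊆ J1
      · exact ⟨M, rfl, hM, hchain, rfl⟩
      · push_neg at hchain
        obtain ⟨J1, hJ1, J2, hJ2, hnc1, hnc2⟩ := hchain
        have hne : J2 ≠ J1 := by rintro rfl; exact hnc1 subset_rfl
        have hJ2' : J2 ∈ M.erase J1 := (Multiset.mem_erase_of_ne hne).2 hJ2
        set M₀ := (M.erase J1).erase J2 with hM₀
        have hMeq : M = J1 ::ₘ J2 ::ₘ M₀ := by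
          rw [hM₀, Multiset.cons_erase hJ2', Multiset.cons_erase hJ1]
        set M'' := (J1 ∪ J2) ::ₘ (starOp lt' J1 J2) ::ₘ M₀ with hM''
        have hM₀sub : ∀ J ∈ M₀, J ∈ M := by
          intro J hJ
          rw [hMeq]; exact Multiset.mem_cons_of_mem (Multiset.mem_cons_of_mem hJ)
        have hid1 : IsLowerIdeal lt J1 := hM _ hJ1
        have hid2 : IsLowerIdeal lt J2 := hM _ hJ2
        have hM''id : ∀ J ∈ M'', IsLowerIdeal lt J := by
          intro J hJ
          rw [hM''] at hJ
          rcases Multiset.mem_cons.1 hJ with rfl | hJ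
          · exact union_ideal hid1 hid2
          · rcases Multiset.mem_cons.1 hJ with rfl | hJ
            · exact hstar _ _ hid1 hid2
            · exact hM _ (hM₀sub _ hJ)
        have hcard : Multiset.card M'' = Multiset.card M := by
          rw [hM'', hMeq]; simp
        -- potential strictly increases
        have hpotM : (M.map fun J => 2 ^ J.ncard).sum
            = 2 ^ J1.ncard + 2 ^ J2.ncard + (M₀.map fun J => 2 ^ J.ncard).sum := by
          rw [hMeq]; simp [Multiset.sum_cons]; ring
        have hpotM'' : (M''.map fun J => 2 ^ J.ncard).sum
            = 2 ^ (J1 ∪ J2).ncard + 2 ^ (starOp lt' J1 J2).ncard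
              + (M₀.map fun J => 2 ^ J.ncard).sum := by
          rw [hM'']; simp [Multiset.sum_cons]; ring
        have hc1 : J1.ncard < (J1 ∪ J2).ncard := by
          apply Set.ncard_lt_ncard _ (Set.toFinite _)
          refine ⟨Set.subset_union_left, fun h => hnc2 (fun x hx => h (Or.inr hx))⟩
        have hc2 : J2.ncard < (J1 ∪ J2).ncard := by
          apply Set.ncard_lt_ncard _ (Set.toFinite _)
          refine ⟨Set.subset_union_right, fun h => hnc1 (fun x hx => h (Or.inl hx))⟩
        have hkey : 2 ^ J1.ncard + 2 ^ J2.ncard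
            < 2 ^ (J1 ∪ J2).ncard + 2 ^ (starOp lt' J1 J2).ncard := by
          set u := (J1 ∪ J2).ncard with hu
          have hu1 : 1 ≤ u := by omega
          have h2a : 2 ^ J1.ncard ≤ 2 ^ (u - 1) :=
            Nat.pow_le_pow_right (by norm_num) (by omega)
          have h2b : 2 ^ J2.ncard ≤ 2 ^ (u - 1) :=
            Nat.pow_le_pow_right (by norm_num) (by omega)
          have hsum : 2 ^ (u - 1) + 2 ^ (u - 1) = 2 ^ u := by
            rw [← two_mul, ← pow_succ']
            congr 1
            omega
          have hpos : 0 < 2 ^ (starOp lt' J1 J2).ncard := Nat.pow_pos (by norm_num)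
          calc 2 ^ J1.ncard + 2 ^ J2.ncard ≤ 2 ^ (u - 1) + 2 ^ (u - 1) := add_le_add h2a h2b
            _ = 2 ^ u := hsum
            _ < 2 ^ u + 2 ^ (starOp lt' J1 J2).ncard := Nat.lt_add_of_pos_right hpos
        -- bound on the potential
        have hbound : (M''.map fun J => 2 ^ J.ncard).sum
            ≤ Multiset.card M * 2 ^ Fintype.card P := by
          have h1 : ∀ x ∈ (M''.map fun J => 2 ^ J.ncard), x ≤ 2 ^ Fintype.card P := by
            intro x hx
            obtain ⟨J, _, rfl⟩ := Multiset.mem_map.1 hx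
            apply Nat.pow_le_pow_right (by norm_num)
            calc J.ncard ≤ (Set.univ : Set P).ncard :=
                  Set.ncard_le_ncard (Set.subset_univ J) (Set.toFinite _)
              _ = Fintype.card P := by rw [Set.ncard_univ, Nat.card_eq_fintype_card]
          calc (M''.map fun J => 2 ^ J.ncard).sum
              ≤ Multiset.card (M''.map fun J => 2 ^ J.ncard) • 2 ^ Fintype.card P :=
                Multiset.sum_le_card_nsmul _ _ h1
            _ = Multiset.card M * 2 ^ Fintype.card P := by
                rw [Multiset.card_map, hcard, smul_eq_mul]
        -- measure decreases
        have hab : (M.map fun J => 2 ^ J.ncard).sum < (M''.map fun J => 2 ^ J.ncard).sum := by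
          rw [hpotM, hpotM'']
          exact Nat.add_lt_add_right hkey _
        set B := Multiset.card M * 2 ^ Fintype.card P with hB
        set a := (M.map fun J => 2 ^ J.ncard).sum with ha
        set b := (M''.map fun J => 2 ^ J.ncard).sum with hb
        clear_value B a b
        have hdec : B + 1 - b < n := by omega
        obtain ⟨M', hc', hid', hch', hsum'⟩ := ih (B + 1 - b) hdec M''
          (by rw [hcard, ← hb, ← hB]) hM''id
        refine ⟨M', by rw [hc', hcard], hid', hch', ?_⟩
        rw [hsum']
        rw [hM'', hMeq]
        simp only [Multiset.map_cons, Multiset.sum_cons]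
        rw [← add_assoc, ← add_assoc, ← exchange hweak hid1 hid2]
  exact main _ M rfl hM

end Sorting

section Div

variable {P : Type*} [Fintype P] {lt lt' : P → P → Prop}

lemma subset_of_max_subset (hlt'irr : ∀ p, ¬ lt' p p)
    (hlt'tr : ∀ a b c, lt' a b → lt' b c → lt' a c)
    (hweak : ∀ p q, lt' p q → lt p q)
    {K U : Set P} (hU : IsLowerIdeal lt U)
    (h : maxElems lt' K ⊆ U) : K ⊆ U := by
  intro p hp
  obtain ⟨a, haM, hpa⟩ := exists_max_above hlt'irr hlt'tr K p hp
  rcases hpa with rfl | hlt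
  · exact h haM
  · exact hU (hweak _ _ hlt) (h haM)

lemma exists_top : ∀ (s : Finset (Set P)), s.Nonempty →
    (∀ A ∈ s, ∀ B ∈ s, A ⊆ B ∨ B ⊆ A) →
    ∃ K ∈ s, ∀ J ∈ s, J ⊆ K := by
  classical
  intro s
  induction s using Finset.induction_on with
  | empty => intro hs _; exact absurd hs (by simp)
  | insert _ _ hnotmem ih =>
    rename_i a s
    intro _ hcomp
    by_cases hse : s.Nonempty
    · obtain ⟨K, hK, hmax⟩ := ih hse (fun A hA B hB =>
        hcomp A (Finset.mem_insert_of_mem hA) B (Finset.mem_insert_of_mem hB))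
      rcases hcomp a (Finset.mem_insert_self a s) K (Finset.mem_insert_of_mem hK) with hc | hc
      · refine ⟨K, Finset.mem_insert_of_mem hK, ?_⟩
        intro J hJ
        rcases Finset.mem_insert.1 hJ with rfl | hJ
        · exact hc
        · exact hmax J hJ
      · refine ⟨a, Finset.mem_insert_self a s, ?_⟩
        intro J hJ
        rcases Finset.mem_insert.1 hJ with rfl | hJ
        · exact subset_rfl
        · exact (hmax J hJ).trans hc
    · rw [Finset.not_nonempty_iff_eq_empty] at hse
      subst hse
      refine ⟨a, Finset.mem_insert_self a _, ?_⟩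
      intro J hJ
      rcases Finset.mem_insert.1 hJ with rfl | hJ
      · exact subset_rfl
      · exact absurd hJ (by simp)

lemma ind_max_empty : ind (maxElems lt' (∅ : Set P)) = 0 := by
  funext p
  rw [ind_apply, if_neg]
  · rfl
  · rintro ⟨h, -⟩; exact h

lemma sum_map_count [DecidableEq (Set P)] (M : Multiset (Set P)) (f : Set P → ℝ) (K : Set P)
    (hother : ∀ J ∈ M, J ≠ K → f J = 0) :
    (M.map f).sum = (M.count K : ℝ) * f K := by
  induction M using Multiset.induction with
  | empty => simp
  | cons a s ihs =>
    have hs : ∀ J ∈ s, J ≠ K → f J = 0 :=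
      fun J hJ => hother J (Multiset.mem_cons_of_mem hJ)
    by_cases ha : a = K
    · subst ha
      rw [Multiset.map_cons, Multiset.sum_cons, ihs hs, Multiset.count_cons_self]
      push_cast
      ring
    · rw [Multiset.map_cons, Multiset.sum_cons, ihs hs,
        hother a (Multiset.mem_cons_self a s) ha,
        Multiset.count_cons_of_ne (fun h => ha h.symm)]
      ring

lemma div_lemma (hlt'irr : ∀ p, ¬ lt' p p)
    (hlt'tr : ∀ a b c, lt' a b → lt' b c → lt' a c)
    (hweak : ∀ p q, lt' p q → lt p q) :
    ∀ (n : ℕ) (M : Multiset (Set P)), Multiset.card M = n →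
    ∀ (N k : ℕ), 1 ≤ N → Multiset.card M = N * k →
    (∀ J ∈ M, IsLowerIdeal lt J) →
    (∀ J1 ∈ M, ∀ J2 ∈ M, J1 ⊆ J2 ∨ J2 ⊆ J1) →
    ∀ X : P → ℝ, (∀ p, ∃ m : ℤ, X p = m) →
    (M.map fun J => ind (maxElems lt' J)).sum = (N : ℝ) • X →
    ∃ L : Multiset (Set P), Multiset.card L = k ∧ (∀ J ∈ L, IsLowerIdeal lt J) ∧
      (L.map fun J => ind (maxElems lt' J)).sum = X := by
  classical
  intro n
  induction n using Nat.strong_induction_on with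
  | _ n ih =>
  intro M hMn N k hN hNk hMid hMcomp X hXint hXsum
  have hNR : (N : ℝ) ≠ 0 := Nat.cast_ne_zero.2 (by omega)
  by_cases hM0 : M = 0
  · subst hM0
    have hk : k = 0 := by
      simp at hNk
      omega
    subst hk
    have hX : X = 0 := by
      have h0 : (N : ℝ) • X = 0 := by simpa using hXsum.symm
      rcases smul_eq_zero.1 h0 with h | h
      · exact absurd h hNR
      · exact h
    exact ⟨0, by simp, by simp, by simp [hX]⟩
  · have hMne : ∃ J, J ∈ M := Multiset.exists_mem_of_ne_zero hM0
    have htf : M.toFinset.Nonempty := by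
      obtain ⟨J, hJ⟩ := hMne
      exact ⟨J, Multiset.mem_toFinset.2 hJ⟩
    obtain ⟨K, hKtf, hKtop⟩ := exists_top M.toFinset htf
      (fun A hA B hB => hMcomp A (Multiset.mem_toFinset.1 hA) B (Multiset.mem_toFinset.1 hB))
    have hKM : K ∈ M := Multiset.mem_toFinset.1 hKtf
    have hKid : IsLowerIdeal lt K := hMid K hKM
    by_cases hKe : K = ∅
    · -- all ideals are empty
      have hall : ∀ J ∈ M, J = (∅ : Set P) := by
        intro J hJ
        have := hKtop J (Multiset.mem_toFinset.2 hJ)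
        rw [hKe] at this
        exact Set.subset_eq_empty this rfl
      have hsum0 : (M.map fun J => ind (maxElems lt' J)).sum = 0 := by
        apply Multiset.sum_eq_zero
        intro f hf
        obtain ⟨J, hJ, rfl⟩ := Multiset.mem_map.1 hf
        rw [hall J hJ, ind_max_empty]
      have hX : X = 0 := by
        rw [hsum0] at hXsum
        rcases smul_eq_zero.1 hXsum.symm with h | h
        · exact absurd h hNR
        · exact h
      refine ⟨Multiset.replicate k ∅, by simp, ?_, ?_⟩
      · intro J hJ
        rw [Multiset.eq_of_mem_replicate hJ]
        intro p q _ hq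
        exact hq
      · rw [Multiset.map_replicate, hX]
        simp [ind_max_empty]
    · -- find a witness point
      have hwit : ∃ p, p ∈ maxElems lt' K ∧ ∀ J ∈ M, J ≠ K → p ∉ J := by
        set F := M.toFinset.erase K with hF
        by_cases hFe : F.Nonempty
        · obtain ⟨Js, hJsF, hJsmax⟩ := exists_top F hFe
            (fun A hA B hB => hMcomp A (Multiset.mem_toFinset.1 (Finset.mem_of_mem_erase hA))
              B (Multiset.mem_toFinset.1 (Finset.mem_of_mem_erase hB)))
          have hJsK : Js ⊆ K := hKtop Js (Finset.mem_of_mem_erase hJsF)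
          have hJsne : Js ≠ K := Finset.ne_of_mem_erase hJsF
          have hJsid : IsLowerIdeal lt Js :=
            hMid Js (Multiset.mem_toFinset.1 (Finset.mem_of_mem_erase hJsF))
          have hns : ¬ maxElems lt' K ⊆ Js := by
            intro h
            have hKJs : K ⊆ Js := subset_of_max_subset hlt'irr hlt'tr hweak hJsid h
            exact hJsne (Set.Subset.antisymm hJsK hKJs)
          obtain ⟨p, hpmax, hpJs⟩ := Set.not_subset.1 hns
          refine ⟨p, hpmax, ?_⟩
          intro J hJ hJne hpJ
          have hJF : J ∈ F := Finset.mem_erase.2 ⟨hJne, Multiset.mem_toFinset.2 hJ⟩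
          exact hpJs (hJsmax J hJF hpJ)
        · have hallK : ∀ J ∈ M, J = K := by
            intro J hJ
            by_contra hne
            exact hFe ⟨J, Finset.mem_erase.2 ⟨hne, Multiset.mem_toFinset.2 hJ⟩⟩
          obtain ⟨q, hq⟩ := Set.nonempty_iff_ne_empty.2 hKe
          obtain ⟨a, haM, -⟩ := exists_max_above hlt'irr hlt'tr K q hq
          exact ⟨a, haM, fun J hJ hJne => absurd (hallK J hJ) hJne⟩
      obtain ⟨pw, hpw1, hpw2⟩ := hwit
      set c := M.count K with hc
      have hc1 : 1 ≤ c := by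
        rw [hc]
        exact Multiset.one_le_count_iff_mem.2 hKM
      -- evaluate the sum at pw
      have hval : ((M.map fun J => ind (maxElems lt' J)).sum) pw = (c : ℝ) := by
        rw [msum_apply, Multiset.map_map]
        rw [sum_map_count M _ K]
        · simp only [Function.comp_apply]
          rw [ind_apply, if_pos hpw1, mul_one]
        · intro J hJ hJne
          simp only [Function.comp_apply]
          rw [ind_apply, if_neg]
          intro hmem
          exact hpw2 J hJ hJne hmem.1
      obtain ⟨m, hm⟩ := hXint pw
      have hcm : (c : ℤ) = (N : ℤ) * m := by
        have h1 : (c : ℝ) = (N : ℝ) * (m : ℝ) := by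
          rw [← hval, hXsum]
          simp [hm]
        exact_mod_cast h1
      have hm1 : 1 ≤ m := by
        by_contra h
        push_neg at h
        have hm0 : m ≤ 0 := by omega
        have h2 : (N : ℤ) * m ≤ 0 :=
          mul_nonpos_of_nonneg_of_nonpos (by positivity) hm0
        rw [← hcm] at h2
        omega
      set mK := m.toNat with hmK
      have hmKm : (mK : ℤ) = m := Int.toNat_of_nonneg (by omega)
      have hcNm : c = N * mK := by
        have : (c : ℤ) = (N : ℤ) * (mK : ℤ) := by rw [hmKm]; exact hcm
        exact_mod_cast this
      have hcle : c ≤ Multiset.card M := by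
        rw [hc]
        exact Multiset.count_le_card K M
      have hmKk : mK ≤ k := by
        rw [hNk, hcNm] at hcle
        exact Nat.le_of_mul_le_mul_left hcle (by omega)
      -- the rest of the multiset
      set M'' := M.filter (fun J => ¬ J = K) with hM''
      have hMsplit : M.filter (fun J => J = K) + M'' = M := Multiset.filter_add_not _ M
      have hfilterK : ∀ J ∈ M.filter (fun J => J = K), J = K :=
        fun J hJ => (Multiset.mem_filter.1 hJ).2
      have hcardfK : Multiset.card (M.filter (fun J => J = K)) = c := by
        rw [hc]
        rw [Multiset.count_eq_card_filter_eq]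
        congr 1
        apply Multiset.filter_congr
        intro J _
        constructor
        · intro h; exact h.symm
        · intro h; exact h.symm
      have hcardM'' : Multiset.card M'' = N * (k - mK) := by
        have h2 := congrArg Multiset.card hMsplit
        rw [Multiset.card_add, hcardfK, hNk] at h2
        rw [Nat.mul_sub]
        omega
      -- new target vector
      set X' := fun p => X p - (mK : ℝ) * ind (maxElems lt' K) p with hX'
      have hX'int : ∀ p, ∃ m : ℤ, X' p = m := by
        intro p
        obtain ⟨mp, hmp⟩ := hXint p
        by_cases hpK : p ∈ maxElems lt' K
        · exact ⟨mp - mK, by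
            simp only [hX']
            rw [hmp, ind_apply, if_pos hpK]; push_cast; ring⟩
        · exact ⟨mp, by
            simp only [hX']
            rw [hmp, ind_apply, if_neg hpK]; ring⟩
      have hsumfK : ((M.filter (fun J => J = K)).map fun J => ind (maxElems lt' J)).sum
          = (c : ℝ) • ind (maxElems lt' K) := by
        have : (M.filter (fun J => J = K)).map (fun J => ind (maxElems lt' J))
            = Multiset.replicate c (ind (maxElems lt' K)) := by
          rw [Multiset.eq_replicate]
          constructor
          · rw [Multiset.card_map, hcardfK]
          · intro b hb
            obtain ⟨J, hJ, rfl⟩ := Multiset.mem_map.1 hb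
            rw [hfilterK J hJ]
        rw [this, Multiset.sum_replicate, ← Nat.cast_smul_eq_nsmul ℝ]
      have hXsum'' : (M''.map fun J => ind (maxElems lt' J)).sum = (N : ℝ) • X' := by
        have h3 : ((M.filter (fun J => J = K)).map fun J => ind (maxElems lt' J)).sum
            + (M''.map fun J => ind (maxElems lt' J)).sum = (N : ℝ) • X := by
          rw [← Multiset.sum_add, ← Multiset.map_add, hMsplit, hXsum]
        rw [hsumfK] at h3
        funext p
        have h4 := congrFun h3 p
        simp only [Pi.add_apply, Pi.smul_apply, smul_eq_mul] at h4 ⊢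
        simp only [hX']
        have h6 : (mK:ℝ) * N = (c:ℝ) := by
          rw [hcNm]; push_cast; ring
        have h5 : (N:ℝ) * ((mK:ℝ) * ind (maxElems lt' K) p) = (c:ℝ) * ind (maxElems lt' K) p := by
          rw [← h6]; ring
        linarith [h4, h5]
      have hM''sub : ∀ J ∈ M'', J ∈ M := fun J hJ => Multiset.mem_of_mem_filter hJ
      have hcard_lt : Multiset.card M'' < n := by
        have h2 := congrArg Multiset.card hMsplit
        rw [Multiset.card_add, hcardfK] at h2
        omega
      obtain ⟨L'', hL''card, hL''id, hL''sum⟩ := ih (Multiset.card M'') hcard_lt M'' rfl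
        N (k - mK) hN hcardM'' (fun J hJ => hMid J (hM''sub J hJ))
        (fun J1 h1 J2 h2 => hMcomp J1 (hM''sub J1 h1) J2 (hM''sub J2 h2)) X' hX'int hXsum''
      refine ⟨Multiset.replicate mK K + L'', ?_, ?_, ?_⟩
      · rw [Multiset.card_add, Multiset.card_replicate, hL''card]
        omega
      · intro J hJ
        rcases Multiset.mem_add.1 hJ with hJ | hJ
        · rw [Multiset.eq_of_mem_replicate hJ]
          exact hKid
        · exact hL''id J hJ
      · rw [Multiset.map_add, Multiset.sum_add, hL''sum, Multiset.map_replicate,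
          Multiset.sum_replicate]
        funext p
        simp only [Pi.add_apply, hX']
        simp only [← Nat.cast_smul_eq_nsmul ℝ, Pi.smul_apply, smul_eq_mul]
        ring

end Div

section Rat

variable {P : Type*} [Fintype P]

/-- If a rational vector is in the real span of rational vectors, it is in their rational span. -/
lemma ratSpan {ι : Type*} [Fintype ι] (u : ι → (P → ℚ)) (v : P → ℚ)
    (h : (fun p => ((v p : ℝ))) ∈
      Submodule.span ℝ (Set.range (fun i => fun p => ((u i p : ℝ))))) :
    v ∈ Submodule.span ℚ (Set.range u) := by
  by_contra hv
  obtain ⟨f, hf0, hfmap⟩ := Submodule.exists_dual_map_eq_bot_of_notMem hv inferInstance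
  have hfu : ∀ i, f (u i) = 0 := by
    intro i
    have hmem : f (u i) ∈ (Submodule.span ℚ (Set.range u)).map f :=
      Submodule.mem_map_of_mem (Submodule.subset_span (Set.mem_range_self i))
    rw [hfmap] at hmem
    simpa using hmem
  classical
  set c : P → ℚ := fun p => f (fun q => if p = q then 1 else 0) with hcdef
  have hfx : ∀ x : P → ℚ, f x = ∑ p, x p * c p := by
    intro x
    rw [LinearMap.pi_apply_eq_sum_univ f x]
    simp [hcdef, smul_eq_mul]
  set F : (P → ℝ) → ℝ := fun x => ∑ p, x p * (c p : ℝ) with hFdef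
  have hF0 : ∀ x ∈ Submodule.span ℝ (Set.range (fun i => fun p => ((u i p : ℝ)))), F x = 0 := by
    intro x hx
    induction hx using Submodule.span_induction with
    | mem x hx =>
      obtain ⟨i, rfl⟩ := hx
      have : F (fun p => ((u i p : ℝ))) = ((f (u i) : ℚ) : ℝ) := by
        rw [hfx, hFdef]
        push_cast
        rfl
      rw [this, hfu i]
      norm_num
    | zero => simp [hFdef]
    | add x y _ _ hx hy =>
      have : F (x + y) = F x + F y := by
        simp [hFdef, Pi.add_apply, add_mul, Finset.sum_add_distrib]
      rw [this, hx, hy, add_zero]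
    | smul a x _ hx =>
      have : F (a • x) = a * F x := by
        simp [hFdef, Pi.smul_apply, smul_eq_mul, Finset.mul_sum, mul_assoc]
      rw [this, hx, mul_zero]
  have hFv : F (fun p => ((v p : ℝ))) = ((f v : ℚ) : ℝ) := by
    rw [hfx, hFdef]
    push_cast
    rfl
  have := hF0 _ h
  rw [hFv] at this
  exact hf0 (by exact_mod_cast this)

/-- real coefficients in an affinely independent rational combination are rational -/
lemma rat_coeffs {ι : Type*} [Fintype ι] (zq : ι → P → ℚ) (yq : P → ℚ) (w : ι → ℝ)
    (hAI : AffineIndependent ℝ (fun i => fun p => ((zq i p : ℝ))))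
    (hw1 : ∑ i, w i = 1)
    (hsum : ∑ i, w i • (fun p => ((zq i p : ℝ))) = fun p => ((yq p : ℝ))) :
    ∀ i, ∃ q : ℚ, w i = (q : ℝ) := by
  classical
  have hne : Nonempty ι := by
    by_contra hempty
    rw [not_nonempty_iff] at hempty
    rw [Finset.univ_eq_empty, Finset.sum_empty] at hw1
    norm_num at hw1
  obtain ⟨i0⟩ := hne
  set z : ι → P → ℝ := fun i => fun p => ((zq i p : ℝ)) with hz
  set uq : {i // i ≠ i0} → P → ℚ := fun i => zq i - zq i0 with huq
  set uR : {i // i ≠ i0} → P → ℝ := fun i => z i - z i0 with huR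
  have hcastu : ∀ i : {i // i ≠ i0}, (fun p => ((uq i p : ℝ))) = uR i := by
    intro i
    funext p
    simp [huq, huR, hz]
  have hLI : LinearIndependent ℝ uR := by
    have := (affineIndependent_iff_linearIndependent_vsub ℝ z i0).1 hAI
    exact this
  set vq : P → ℚ := yq - zq i0 with hvq
  set vR : P → ℝ := (fun p => ((yq p : ℝ))) - z i0 with hvR
  have hcastv : (fun p => ((vq p : ℝ))) = vR := by
    funext p
    simp [hvq, hvR, hz]
  have hvsum : ∑ i : {i // i ≠ i0}, w i • uR i = vR := by
    have h1 : ∑ i : ι, w i • (z i - z i0) = vR := by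
      have he : ∑ i : ι, w i • (z i - z i0) = (∑ i, w i • z i) - (∑ i, w i) • z i0 := by
        rw [Finset.sum_smul, ← Finset.sum_sub_distrib]
        congr 1
        funext i
        rw [smul_sub]
      rw [he, hw1, one_smul, hsum, hvR]
    have h2 := (Finset.add_sum_erase Finset.univ (fun i => w i • (z i - z i0))
      (Finset.mem_univ i0)).symm
    have h3 : ∑ i ∈ Finset.univ.erase i0, w i • (z i - z i0)
        = ∑ i : {i // i ≠ i0}, w i • uR i := by
      rw [Finset.sum_subtype (p := fun x => x ≠ i0) (Finset.univ.erase i0) (by simp) (fun i => w i • (z i - z i0))]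
    rw [← h3]
    rw [h2] at h1
    simpa using h1
  have hspan : vq ∈ Submodule.span ℚ (Set.range uq) := by
    apply ratSpan
    rw [show (Set.range (fun i => fun p => ((uq i p : ℝ)))) = Set.range uR from
      congrArg Set.range (funext hcastu)]
    rw [hcastv]
    rw [← hvsum]
    exact Submodule.sum_smul_mem _ _
      (fun i _ => Submodule.subset_span (Set.mem_range_self i))
  obtain ⟨qc, hqc⟩ := (Submodule.mem_span_range_iff_exists_fun ℚ).1 hspan
  have hqcR : ∑ i, ((qc i : ℝ)) • uR i = vR := by
    rw [← hcastv]
    funext p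
    rw [Finset.sum_apply]
    simp only [Pi.smul_apply, smul_eq_mul]
    have hup : ∀ i, uR i p = ((uq i p : ℝ)) := fun i => (congrFun (hcastu i) p).symm
    have h0 := congrFun hqc p
    rw [Finset.sum_apply] at h0
    simp only [Pi.smul_apply, smul_eq_mul] at h0
    calc ∑ i, (qc i : ℝ) * uR i p = ∑ i, ((qc i * uq i p : ℚ) : ℝ) := by
          apply Finset.sum_congr rfl
          intro i _
          rw [hup i]
          push_cast
          ring
      _ = ((∑ i, qc i * uq i p : ℚ) : ℝ) := by push_cast; rfl
      _ = ((vq p : ℚ) : ℝ) := by rw [h0]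
  have huniq : ∀ i, (qc i : ℝ) - w i = 0 := by
    apply Fintype.linearIndependent_iff.1 hLI
    simp only [sub_smul]
    rw [Finset.sum_sub_distrib, hqcR, hvsum, sub_self]
  intro i
  by_cases hi : i = i0
  · rw [hi]
    refine ⟨1 - ∑ j : {i // i ≠ i0}, qc j, ?_⟩
    have hw0 : w i0 = 1 - ∑ j : {i // i ≠ i0}, w (j : ι) := by
      have h2 := (Finset.add_sum_erase Finset.univ w (Finset.mem_univ i0)).symm
      have h3 : ∑ i ∈ Finset.univ.erase i0, w i = ∑ j : {i // i ≠ i0}, w (j : ι) := by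
        rw [Finset.sum_subtype (p := fun x => x ≠ i0) (Finset.univ.erase i0) (by simp) w]
      rw [hw1, h3] at h2
      linarith [h2]
    rw [hw0]
    push_cast
    have : ∀ j : {i // i ≠ i0}, w (j : ι) = (qc j : ℝ) :=
      fun j => by have := huniq j; linarith
    rw [Finset.sum_congr rfl (fun j _ => this j)]
  · exact ⟨qc ⟨i, hi⟩, by have := huniq ⟨i, hi⟩; linarith⟩

end Rat


/-- The relative poset polytope `R(P, lt, lt')` is normal: every integer point of
`k·R(P, lt, lt')` is a sum of `k` integer points of `R(P, lt, lt')`. -/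
theorem stmt5 {P : Type*} [Fintype P] (lt lt' : P → P → Prop)
    (hltirr : ∀ p, ¬ lt p p) (hlttr : ∀ a b c, lt a b → lt b c → lt a c)
    (hlt'irr : ∀ p, ¬ lt' p p) (hlt'tr : ∀ a b c, lt' a b → lt' b c → lt' a c)
    (hweak : ∀ p q, lt' p q → lt p q)
    (hstar : ∀ J1 J2 : Set P, IsLowerIdeal lt J1 → IsLowerIdeal lt J2 →
      IsLowerIdeal lt (starOp lt' J1 J2))
    (k : ℕ) (hk : 1 ≤ k) (x : P → ℤ)
    (hx : (fun p => (x p : ℝ)) ∈ dilate k (RPP lt lt')) :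
    ∃ y : Fin k → P → ℤ,
      (∀ i, (fun p => (y i p : ℝ)) ∈ RPP lt lt') ∧
      (fun p => (x p : ℝ)) = ∑ i, (fun p => (y i p : ℝ)) := by

  classical
  obtain ⟨yv, hyR, hxy⟩ := hx
  rw [RPP] at hyR
  obtain ⟨ι, hfin, z, w, hrange, hAI, hwpos, hw1, hsum⟩ :=
    eq_pos_convex_span_of_mem_convexHull hyR
  letI := hfin
  have hJ : ∀ i, ∃ J : Set P, IsLowerIdeal lt J ∧ z i = ind (maxElems lt' J) :=
    fun i => hrange (Set.mem_range_self i)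
  choose J hJid hJz using hJ
  set zq : ι → P → ℚ := fun i p => if p ∈ maxElems lt' (J i) then 1 else 0 with hzq
  have hzcast : ∀ i, z i = fun p => ((zq i p : ℝ)) := by
    intro i
    rw [hJz i]
    funext p
    rw [ind_apply, hzq]
    by_cases h : p ∈ maxElems lt' (J i) <;> simp [h]
  have hk0 : (k : ℝ) ≠ 0 := Nat.cast_ne_zero.2 (by omega)
  set yq : P → ℚ := fun p => (x p : ℚ) / k with hyq
  have hycast : yv = fun p => ((yq p : ℝ)) := by
    funext p
    have h1 := congrFun hxy p
    simp only [Pi.smul_apply, smul_eq_mul] at h1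
    rw [hyq]
    push_cast
    field_simp
    linarith [h1]
  have hAI' : AffineIndependent ℝ (fun i => fun p => ((zq i p : ℝ))) := by
    have he : (fun i => fun p => ((zq i p : ℝ))) = z := funext (fun i => (hzcast i).symm)
    rw [he]
    exact hAI
  have hsum' : ∑ i, w i • (fun p => ((zq i p : ℝ))) = fun p => ((yq p : ℝ)) := by
    rw [← hycast]
    rw [← hsum]
    apply Finset.sum_congr rfl
    intro i _
    rw [← hzcast i]
  have hwq' := rat_coeffs zq yq w hAI' hw1 hsum'
  choose wq hwq using hwq'
  have hwqpos : ∀ i, 0 < wq i := by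
    intro i
    have := hwpos i
    rw [hwq i] at this
    exact_mod_cast this
  set N : ℕ := ∏ i, (wq i).den with hN
  have hNpos : 1 ≤ N := by
    rw [hN]
    exact Finset.prod_pos (fun i _ => (wq i).den_pos)
  -- integer numerators
  have hn : ∀ i, ∃ n : ℕ, (n : ℚ) = wq i * N := by
    intro i
    obtain ⟨m, hm⟩ := Finset.dvd_prod_of_mem (fun i => (wq i).den) (Finset.mem_univ i)
    refine ⟨((wq i).num * m).toNat, ?_⟩
    have hnum : 0 < (wq i).num := Rat.num_pos.2 (hwqpos i)
    have hton : (((wq i).num * m).toNat : ℤ) = (wq i).num * m :=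
      Int.toNat_of_nonneg (by positivity)
    have hcast : ((((wq i).num * m).toNat : ℕ) : ℚ) = (((wq i).num : ℚ)) * m := by
      rw [← Int.cast_natCast, hton]
      push_cast
      ring
    rw [hcast, hN, hm]
    have hd : ((wq i).den : ℚ) ≠ 0 := Nat.cast_ne_zero.2 (wq i).den_pos.ne'
    have hden : wq i * ((wq i).den : ℚ) = ((wq i).num : ℚ) := by
      have h9 := Rat.num_div_den (wq i)
      rw [div_eq_iff hd] at h9
      exact h9.symm
    have hrw : wq i * ((wq i).den * m : ℕ) = ((wq i).num : ℚ) * m := by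
      push_cast
      rw [← mul_assoc, hden]
    rw [hrw]
  choose nn hnn using hn
  have hnnR : ∀ i, ((nn i : ℝ)) = w i * N := by
    intro i
    have := hnn i
    have h2 : ((nn i : ℚ) : ℝ) = ((wq i * N : ℚ) : ℝ) := by rw [this]
    push_cast at h2
    rw [hwq i]
    exact h2
  have hsumw : ∑ i, wq i = 1 := by
    have : ((∑ i, wq i : ℚ) : ℝ) = 1 := by
      push_cast
      rw [← hw1]
      exact Finset.sum_congr rfl (fun i _ => (hwq i).symm)
    exact_mod_cast this
  have hsumn : ∑ i, nn i = N := by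
    have : ((∑ i, nn i : ℕ) : ℚ) = (N : ℚ) := by
      push_cast
      calc ∑ i, (nn i : ℚ) = ∑ i, wq i * N := Finset.sum_congr rfl (fun i _ => hnn i)
        _ = (∑ i, wq i) * N := by rw [Finset.sum_mul]
        _ = N := by rw [hsumw, one_mul]
    exact_mod_cast this
  -- the master multiset
  set M : Multiset (Set P) := Finset.univ.val.bind (fun i => Multiset.replicate (k * nn i) (J i))
    with hM
  have hMid : ∀ Jm ∈ M, IsLowerIdeal lt Jm := by
    intro Jm hJm
    rw [hM] at hJm
    obtain ⟨i, _, hJm⟩ := Multiset.mem_bind.1 hJm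
    rw [Multiset.eq_of_mem_replicate hJm]
    exact hJid i
  have hMcard : Multiset.card M = N * k := by
    rw [hM, Multiset.card_bind]
    have hcomp : (Multiset.card ∘ fun i : ι => Multiset.replicate (k * nn i) (J i))
        = fun i : ι => k * nn i := by
      funext i
      simp
    rw [hcomp]
    have h5 : (Finset.univ.val.map fun i : ι => k * nn i).sum = ∑ i, k * nn i := rfl
    rw [h5, ← Finset.mul_sum, hsumn]
    ring
  have hMsum : (M.map fun Jm => ind (maxElems lt' Jm)).sum
      = (N : ℝ) • (fun p => ((x p : ℝ))) := by
    rw [hM, Multiset.map_bind, Multiset.sum_bind]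
    have h1 : ∀ i : ι, ((Multiset.replicate (k * nn i) (J i)).map
        fun Jm => ind (maxElems lt' Jm)).sum = ((k * nn i : ℕ) : ℝ) • z i := by
      intro i
      rw [Multiset.map_replicate, Multiset.sum_replicate, ← Nat.cast_smul_eq_nsmul ℝ, hJz i]
    have h2 : (Finset.univ.val.map fun i => ((Multiset.replicate (k * nn i) (J i)).map
        fun Jm => ind (maxElems lt' Jm)).sum)
        = Finset.univ.val.map fun i => ((k * nn i : ℕ) : ℝ) • z i := by
      apply Multiset.map_congr rfl
      intro i _
      exact h1 i
    rw [h2]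
    have h3 : (Finset.univ.val.map fun i => ((k * nn i : ℕ) : ℝ) • z i).sum
        = ∑ i, ((k * nn i : ℕ) : ℝ) • z i := rfl
    rw [h3]
    have h4 : ∀ i : ι, ((k * nn i : ℕ) : ℝ) • z i = ((N : ℝ) * (k : ℝ)) • (w i • z i) := by
      intro i
      rw [smul_smul]
      congr 1
      push_cast
      rw [hnnR i]
      ring
    rw [Finset.sum_congr rfl (fun i _ => h4 i), ← Finset.smul_sum, hsum]
    rw [← hxy]
    rw [smul_smul]
  -- sort into a chain
  obtain ⟨M', hc', hid', hcomp', hsumM'⟩ := sort_multiset hweak hstar M hMid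
  -- extract
  obtain ⟨L, hLcard, hLid, hLsum⟩ := div_lemma hlt'irr hlt'tr hweak (Multiset.card M') M' rfl
    N k hNpos (by rw [hc', hMcard]) hid' hcomp' (fun p => ((x p : ℝ)))
    (fun p => ⟨x p, rfl⟩) (by rw [hsumM', hMsum])
  -- convert the multiset L into a function Fin k → P → ℤ
  set l : List (Set P) := L.toList with hl
  have hlen : l.length = k := by rw [hl, Multiset.length_toList, hLcard]
  refine ⟨fun i => fun p =>
    if p ∈ maxElems lt' (l.get (Fin.cast hlen.symm i)) then (1 : ℤ) else 0, ?_, ?_⟩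
  · intro i
    set Ji := l.get (Fin.cast hlen.symm i) with hJi
    have hJiL : Ji ∈ L := by
      rw [← Multiset.mem_toList]
      exact l.get_mem _
    have hcast : (fun p => (((if p ∈ maxElems lt' Ji then (1 : ℤ) else 0) : ℤ) : ℝ))
        = ind (maxElems lt' Ji) := by
      funext p
      rw [ind_apply]
      by_cases h : p ∈ maxElems lt' Ji <;> simp [h]
    rw [hcast]
    exact subset_convexHull ℝ _ ⟨Ji, hLid Ji hJiL, rfl⟩
  · have hmapl : (L.map fun Jm => ind (maxElems lt' Jm)).sum
        = ∑ j : Fin l.length, ind (maxElems lt' (l.get j)) := by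
      rw [← Multiset.coe_toList L, ← hl]
      have : (Multiset.ofList l).map (fun Jm => ind (maxElems lt' Jm))
          = Multiset.ofList (l.map fun Jm => ind (maxElems lt' Jm)) := rfl
      rw [this]
      rw [Multiset.sum_coe]
      conv_lhs => rw [← List.ofFn_get l]
      rw [List.map_ofFn, List.sum_ofFn]
      rfl
    have hreindex : ∑ j : Fin l.length, ind (maxElems lt' (l.get j))
        = ∑ i : Fin k, ind (maxElems lt' (l.get (Fin.cast hlen.symm i))) := by
      apply Fintype.sum_equiv (finCongr hlen)
      intro j
      congr 1
    rw [← hLsum, hmapl, hreindex]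
    apply Finset.sum_congr rfl
    intro i _
    funext p
    rw [ind_apply]
    by_cases h : p ∈ maxElems lt' (l.get (Fin.cast hlen.symm i)) <;> simp [h]
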